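/- Let (T*,λ*) be a least-resolved tree for a tree-like map ε. If λ is any edge-labeling of T* with values in M ∪ {⊗} such that (T*,λ) explains ε, then λ = λ*; i.e., the labeling of the least-resolved tree is unique. -/

import Mathlib

namespace GenFitch

/-- A rooted tree with leaf set `X`: a finite tree (acyclic connected simple
graph) with a distinguished root and an injective embedding of `X` onto the
set of vertices of degree at most one (the leaves). -/
structure RootedTree (X : Type) where
  V : Type
  fintypeV : Fintype V
  G : SimpleGraph V
  isTree : G.IsTree
  root : V
  leaf : X → V
  leaf_inj : Function.Injective leaf
  leaf_iff : ∀ v : V, (∃ x : X, leaf x = v) ↔ (G.neighborSet v).ncard ≤ 1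

namespace RootedTree

variable {X : Type}

/-- Degree of a vertex. -/
noncomputable def deg (T : RootedTree X) (v : T.V) : ℕ := (T.G.neighborSet v).ncard

/-- `v` is a leaf. -/
def IsLeaf (T : RootedTree X) (v : T.V) : Prop := ∃ x : X, T.leaf x = v

/-- `T` is phylogenetic: the root is an inner vertex of degree at least 2 and
every other inner vertex has degree at least 3. -/
def Phylo (T : RootedTree X) : Prop :=
  ¬ T.IsLeaf T.root ∧ 2 ≤ T.deg T.root ∧
    ∀ v : T.V, ¬ T.IsLeaf v → v ≠ T.root → 3 ≤ T.deg v

/-- `T` is binary: the root has degree exactly 2 and every other inner vertex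
has degree exactly 3. -/
def Binary (T : RootedTree X) : Prop :=
  T.deg T.root = 2 ∧ ∀ v : T.V, ¬ T.IsLeaf v → v ≠ T.root → T.deg v = 3

/-- `u` is an ancestor of `v` (written `u ⪰_T v`): `u` lies on the (unique)
path from the root to `v`. -/
def Anc (T : RootedTree X) (u v : T.V) : Prop :=
  ∀ p : T.G.Walk T.root v, p.IsPath → u ∈ p.support

/-- `l` is the least common ancestor of the set of vertices `S`. -/
def IsLcaSet (T : RootedTree X) (l : T.V) (S : Set T.V) : Prop :=
  (∀ v ∈ S, T.Anc l v) ∧ ∀ u : T.V, (∀ v ∈ S, T.Anc u v) → T.Anc u l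

/-- `T` displays the rooted triple `xy|z`, i.e. `lca(x,y) ≺ lca(x,y,z)`. -/
def Displays (T : RootedTree X) (x y z : X) : Prop :=
  ∃ l₂ l₃ : T.V, T.IsLcaSet l₂ {T.leaf x, T.leaf y} ∧
    T.IsLcaSet l₃ {T.leaf x, T.leaf y, T.leaf z} ∧ T.Anc l₃ l₂ ∧ l₂ ≠ l₃

end RootedTree

/-- Some edge on the (unique) path from `lca(x,y)` to `y` carries the label
`m`.  Labels are drawn from `Option L`, with `none` playing the role of `⊗`. -/
def PathHasLabel {X L : Type} (T : RootedTree X) (lam : Sym2 T.V → Option L)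
    (x y : X) (m : L) : Prop :=
  ∃ l : T.V, T.IsLcaSet l {T.leaf x, T.leaf y} ∧
    ∃ p : T.G.Walk l (T.leaf y), p.IsPath ∧ ∃ e ∈ p.edges, lam e = some m

/-- The edge-labeled tree `(T,lam)` explains the map `eps`:
for all distinct `x y`, `eps x y = some m` iff some edge on the path from
`lca(x,y)` to `y` has label `m`, and `eps x y = none` (i.e. `⊗`) iff no edge
on that path carries a label in `L`. -/
def Explains {X L : Type} (T : RootedTree X) (lam : Sym2 T.V → Option L)
    (eps : X → X → Option L) : Prop :=
  ∀ x y : X, x ≠ y →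
    ((∀ m : L, eps x y = some m ↔ PathHasLabel T lam x y m) ∧
     (eps x y = none ↔ ∀ m : L, ¬ PathHasLabel T lam x y m))

/-- `eps` is tree-like: some edge-labeled phylogenetic tree explains it. -/
def TreeLike {X L : Type} (eps : X → X → Option L) : Prop :=
  ∃ (T : RootedTree X) (lam : Sym2 T.V → Option L), T.Phylo ∧ Explains T lam eps

/-- The set `X_s` for a symbol `s ∈ M ∪ {⊗}` (encoded as `s : Option M`):
those `x` having an in-arc labeled `s` and all other in-arcs labeled `⊗` or `s`. -/
def Xset {X M : Type} (eps : X → X → Option M) (s : Option M) : Set X :=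
  {x : X | ∃ z : X, z ≠ x ∧ eps z x = s ∧
    ∀ z' : X, z' ≠ z → z' ≠ x → (eps z' x = none ∨ eps z' x = s)}

/-- The sets `X_s`, `s ∈ M ∪ {⊗}`, form a quasi-partition of `X`: pairwise
disjoint, union `X`, and at most one of them empty. -/
def QuasiPartition {X M : Type} (eps : X → X → Option M) : Prop :=
  (∀ s t : Option M, s ≠ t → Disjoint (Xset eps s) (Xset eps t)) ∧
  (⋃ s : Option M, Xset eps s) = Set.univ ∧
  {s : Option M | Xset eps s = ∅}.Subsingleton

/-- A digraph `(Y, A)` is a simple Fitch graph: it is explained by a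
`{1,⊗}`-edge-labeled phylogenetic tree on `Y` (a digraph on at most one
vertex is trivially explained by the trivial tree). -/
def IsFitchGraph (Y : Type) (A : Y → Y → Prop) : Prop :=
  Subsingleton Y ∨
  ∃ (T : RootedTree Y) (lam : Sym2 T.V → Option Unit), T.Phylo ∧
    ∀ x y : Y, x ≠ y → (A x y ↔ PathHasLabel T lam x y Unit.unit)

/-- `T'` is obtained from `T` by contracting (the fibers of) `φ`; equivalently,
`T` refines `T'`. -/
structure IsContractionMap {X : Type} (T T' : RootedTree X) (φ : T.V → T'.V) :
    Prop where
  surj : Function.Surjective φ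
  root_map : φ T.root = T'.root
  leaf_map : ∀ x : X, φ (T.leaf x) = T'.leaf x
  adj_map : ∀ a b : T.V, T.G.Adj a b → φ a = φ b ∨ T'.G.Adj (φ a) (φ b)
  adj_lift : ∀ u v : T'.V, T'.G.Adj u v →
    ∃ a b : T.V, T.G.Adj a b ∧ φ a = u ∧ φ b = v
  fiber_conn : ∀ u : T'.V, (T.G.induce {a : T.V | φ a = u}).Connected

/-- `(T,lam)` is a least-resolved tree explaining `eps`: it explains `eps` and
no tree obtained from `T` by contracting one or more edges admits an
edge-labeling explaining `eps`. -/
def LeastResolved {X M : Type} (eps : X → X → Option M) (T : RootedTree X)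
    (lam : Sym2 T.V → Option M) : Prop :=
  T.Phylo ∧ Explains T lam eps ∧
    ∀ (T' : RootedTree X) (φ : T.V → T'.V) (lam' : Sym2 T'.V → Option M),
      IsContractionMap T T' φ → ¬ Function.Injective φ → T'.Phylo →
        ¬ Explains T' lam' eps

/-- The rooted triple `xy|z` is informative for `eps`. -/
def Informative {X M : Type} (eps : X → X → Option M) (x y z : X) : Prop :=
  x ≠ y ∧ x ≠ z ∧ y ≠ z ∧
  ∃ m : M, eps z x = some m ∧ eps z y = some m ∧ eps x z = eps y z ∧
    (eps x y = none ∨ eps x y = some m) ∧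
    (eps y x = none ∨ eps y x = some m) ∧
    (eps x y = none ∨ eps y x = none)

/-- `T'` (a rooted tree on `Y`, with `incl : Y → X` and vertex embedding `ι`)
is the restriction `T|Y` of `T` to the leaf set `Y`: leaves map to leaves,
the ancestor relation is preserved and reflected, the vertices of `T'`
correspond exactly to the least common ancestors of pairs of `Y`-leaves in
`T`, and the root of `T'` corresponds to the least common ancestor of all
`Y`-leaves. -/
structure IsRestriction {X Y : Type} (T : RootedTree X) (incl : Y → X)
    (T' : RootedTree Y) (ι : T'.V → T.V) : Prop where
  inj : Function.Injective ι
  leaf_map : ∀ y : Y, ι (T'.leaf y) = T.leaf (incl y)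
  anc_iff : ∀ a b : T'.V, T'.Anc a b ↔ T.Anc (ι a) (ι b)
  image : ∀ v : T.V, (∃ a : T'.V, ι a = v) ↔
      ∃ y z : Y, T.IsLcaSet v {T.leaf (incl y), T.leaf (incl z)}
  root_map : T.IsLcaSet (ι T'.root) {v : T.V | ∃ y : Y, v = T.leaf (incl y)}


/-! ### Auxiliary machinery -/

open SimpleGraph

section WalkAux

variable {V : Type} {G : SimpleGraph V} [DecidableEq V]

lemma takeUntil_cons' {a c b u : V} (r : G.Adj a c) (p : G.Walk c b)
    (h : u ∈ (SimpleGraph.Walk.cons r p).support) (hu : a ≠ u)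
    (h' : u ∈ p.support) :
    (SimpleGraph.Walk.cons r p).takeUntil u h
      = SimpleGraph.Walk.cons r (p.takeUntil u h') := by
  rw [SimpleGraph.Walk.takeUntil]
  simp [hu]

/-- comparability of two vertices on a path: one lies on the prefix up to the
other. -/
lemma mem_takeUntil_or : ∀ {a b : V} (p : G.Walk a b) {x y : V}
    (hx : x ∈ p.support) (hy : y ∈ p.support),
    x ∈ (p.takeUntil y hy).support ∨ y ∈ (p.takeUntil x hx).support := by
  intro a b p
  induction p with
  | nil => intro x y hx hy; left
           simp only [SimpleGraph.Walk.mem_support_nil_iff] at hx hy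
           subst hx; subst hy
           exact SimpleGraph.Walk.start_mem_support _
  | cons r p ih =>
    intro x y hx hy
    rename_i a c b
    by_cases hxa : a = x
    · subst hxa; left; exact SimpleGraph.Walk.start_mem_support _
    by_cases hya : a = y
    · subst hya; right; exact SimpleGraph.Walk.start_mem_support _
    have hx' : x ∈ p.support := by
      have : x = a ∨ x ∈ p.support := by simpa using hx
      rcases this with h | h
      · exact absurd h.symm hxa
      · exact h
    have hy' : y ∈ p.support := by
      have : y = a ∨ y ∈ p.support := by simpa using hy
      rcases this with h | h
      · exact absurd h.symm hya
      · exact h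
    rw [takeUntil_cons' r p hy hya hy', takeUntil_cons' r p hx hxa hx']
    rcases ih hx' hy' with h | h
    · left; exact List.mem_cons_of_mem _ h
    · right; exact List.mem_cons_of_mem _ h

end WalkAux

namespace RootedTree

variable {X : Type}

section Basic

variable (T : RootedTree X)

noncomputable instance : Fintype T.V := T.fintypeV

/-- The unique path between two vertices. -/
noncomputable def pth (a b : T.V) : T.G.Walk a b :=
  ((T.isTree.existsUnique_path a b).exists).choose

lemma pth_isPath (a b : T.V) : (T.pth a b).IsPath :=
  ((T.isTree.existsUnique_path a b).exists).choose_spec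

lemma pth_eq {a b : T.V} (p : T.G.Walk a b) (hp : p.IsPath) : p = T.pth a b :=
  ((T.isTree.existsUnique_path a b).unique hp (T.pth_isPath a b))

variable {T}

lemma anc_iff {u v : T.V} : T.Anc u v ↔ u ∈ (T.pth T.root v).support := by
  constructor
  · intro h; exact h _ (T.pth_isPath _ _)
  · intro h p hp
    rw [T.pth_eq p hp]; exact h

lemma anc_refl (v : T.V) : T.Anc v v := fun p _ => p.end_mem_support

lemma pth_self (a : T.V) : T.pth a a = SimpleGraph.Walk.nil := by
  have := T.pth_isPath a a
  rw [SimpleGraph.Walk.isPath_iff_eq_nil] at this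
  exact this

/-- take of the canonical path is the canonical path. -/
lemma takeUntil_pth [DecidableEq T.V] {a b u : T.V} (h : u ∈ (T.pth a b).support) :
    (T.pth a b).takeUntil u h = T.pth a u :=
  T.pth_eq _ ((T.pth_isPath a b).takeUntil h)

lemma dropUntil_pth [DecidableEq T.V] {a b u : T.V} (h : u ∈ (T.pth a b).support) :
    (T.pth a b).dropUntil u h = T.pth u b :=
  T.pth_eq _ ((T.pth_isPath a b).dropUntil h)

lemma anc_antisymm [DecidableEq T.V] {u v : T.V} (h1 : T.Anc u v) (h2 : T.Anc v u) :
    u = v := by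
  rw [anc_iff] at h1 h2
  have e1 := (T.pth T.root v).take_spec h1
  have e2 := (T.pth T.root u).take_spec h2
  rw [takeUntil_pth] at e1 e2
  have l1 := congrArg SimpleGraph.Walk.length e1
  have l2 := congrArg SimpleGraph.Walk.length e2
  rw [SimpleGraph.Walk.length_append] at l1 l2
  have h0 : ((T.pth T.root v).dropUntil u h1).length = 0 := by omega
  exact SimpleGraph.Walk.eq_of_length_eq_zero h0

end Basic

section Tools

variable {T : RootedTree X} [DecidableEq T.V]

open SimpleGraph.Walk

lemma pth_adj {a b : T.V} (h : T.G.Adj a b) :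
    T.pth a b = SimpleGraph.Walk.cons h SimpleGraph.Walk.nil := by
  symm; apply T.pth_eq
  simp [SimpleGraph.Walk.isPath_def, h.ne]

lemma cons_nil_path {a b : T.V} (h : T.G.Adj a b) :
    (SimpleGraph.Walk.cons h (SimpleGraph.Walk.nil : T.G.Walk b b)).IsPath := by
  simp [SimpleGraph.Walk.isPath_def, h.ne]

lemma pth_decomp {u w : T.V} (h : T.G.Adj w u) (hw : w ∈ (T.pth T.root u).support) :
    T.pth T.root u
      = (T.pth T.root w).append (SimpleGraph.Walk.cons h SimpleGraph.Walk.nil) := by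
  conv_lhs => rw [← (T.pth T.root u).take_spec hw]
  rw [takeUntil_pth, dropUntil_pth, pth_adj h]

lemma end_not_mem_front {u w : T.V} (h : T.G.Adj w u) (hw : w ∈ (T.pth T.root u).support) :
    u ∉ (T.pth T.root w).support := by
  have hp := T.pth_isPath T.root u
  rw [pth_decomp h hw, SimpleGraph.Walk.isPath_def, SimpleGraph.Walk.support_append] at hp
  simp only [SimpleGraph.Walk.support_cons, SimpleGraph.Walk.support_nil, List.tail_cons] at hp
  intro hu
  rw [List.nodup_append] at hp
  exact hp.2.2 u hu u (by simp) rfl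

lemma onpath_neighbor_unique {u w₁ w₂ : T.V} (h1 : T.G.Adj w₁ u) (h2 : T.G.Adj w₂ u)
    (m1 : w₁ ∈ (T.pth T.root u).support) (m2 : w₂ ∈ (T.pth T.root u).support) :
    w₁ = w₂ := by
  have d1 := pth_decomp h1 m1
  have d2 := pth_decomp h2 m2
  have he := congrArg SimpleGraph.Walk.edges (d1.symm.trans d2)
  rw [SimpleGraph.Walk.edges_append, SimpleGraph.Walk.edges_append,
    SimpleGraph.Walk.edges_cons, SimpleGraph.Walk.edges_cons,
    SimpleGraph.Walk.edges_nil] at he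
  have hl := congrArg List.getLast? he
  rw [List.getLast?_concat, List.getLast?_concat] at hl
  have hs : s(w₁, u) = s(w₂, u) := by injection hl
  rw [Sym2.eq_iff] at hs
  rcases hs with ⟨h, -⟩ | ⟨h, h'⟩
  · exact h
  · exact absurd h h1.ne

lemma exists_offpath {u : T.V} (hdeg : 2 ≤ T.deg u)
    (hstrict : u = T.root ∨ 3 ≤ T.deg u) (v₀ : T.V) :
    ∃ c, T.G.Adj u c ∧ c ∉ (T.pth T.root u).support ∧ c ≠ v₀ := by
  by_contra hcon
  push_neg at hcon
  have hsub : T.G.neighborSet u ⊆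
      (T.G.neighborSet u ∩ {w | w ∈ (T.pth T.root u).support}) ∪ {v₀} := by
    intro c hc
    by_cases hcs : c ∈ (T.pth T.root u).support
    · exact Or.inl ⟨hc, hcs⟩
    · exact Or.inr (hcon c hc hcs)
  have hss : (T.G.neighborSet u ∩ {w | w ∈ (T.pth T.root u).support}).ncard ≤ 1 := by
    by_contra hgt
    push_neg at hgt
    rw [Set.one_lt_ncard (Set.toFinite _)] at hgt
    obtain ⟨a, ⟨ha1, ha2⟩, b, ⟨hb1, hb2⟩, hab⟩ := hgt
    exact hab (onpath_neighbor_unique ((T.G.mem_neighborSet u a).mp ha1).symm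
      ((T.G.mem_neighborSet u b).mp hb1).symm ha2 hb2)
  have hle : T.deg u ≤ 2 := by
    have h1 := Set.ncard_le_ncard hsub (Set.toFinite _)
    have h2 := Set.ncard_union_le
      (T.G.neighborSet u ∩ {w | w ∈ (T.pth T.root u).support}) {v₀}
    rw [Set.ncard_singleton] at h2
    have : T.deg u = (T.G.neighborSet u).ncard := rfl
    omega
  rcases hstrict with hroot | h3
  · -- u = root : on-path neighbor set is empty
    have hempty : T.G.neighborSet u ∩ {w | w ∈ (T.pth T.root u).support} = ∅ := by
      ext c
      simp only [Set.mem_inter_iff, Set.mem_empty_iff_false, iff_false, not_and]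
      intro hc hcs
      rw [← hroot, pth_self] at hcs
      simp only [SimpleGraph.Walk.support_nil, List.mem_singleton] at hcs
      subst hcs
      exact T.G.irrefl hc
    have h1 := Set.ncard_le_ncard hsub (Set.toFinite _)
    rw [hempty, Set.empty_union, Set.ncard_singleton] at h1
    have : T.deg u = (T.G.neighborSet u).ncard := rfl
    omega
  · omega

lemma extend_path {u c : T.V} (hc : T.G.Adj u c) (hcs : c ∉ (T.pth T.root u).support) :
    T.pth T.root c
      = (T.pth T.root u).append (SimpleGraph.Walk.cons hc SimpleGraph.Walk.nil) := by
  symm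
  apply T.pth_eq
  rw [SimpleGraph.Walk.isPath_def, SimpleGraph.Walk.support_append]
  simp only [SimpleGraph.Walk.support_cons, SimpleGraph.Walk.support_nil, List.tail_cons]
  rw [List.nodup_append]
  refine ⟨(T.pth_isPath T.root u).support_nodup, by simp, ?_⟩
  intro a ha b hb hab; subst hab
  simp only [List.mem_singleton] at hb
  subst hb
  exact hcs ha

lemma exists_leaf_below (hT : T.Phylo) (w : T.V) : ∃ z : X, T.Anc w (T.leaf z) := by
  obtain ⟨t, ht, hmax⟩ := Set.exists_max_image {t : T.V | T.Anc w t}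
    (fun t => (T.pth T.root t).length) (Set.toFinite _) ⟨w, anc_refl w⟩
  by_cases hleaf : T.IsLeaf t
  · obtain ⟨z, hz⟩ := hleaf
    exact ⟨z, by rwa [hz]⟩
  · exfalso
    have hdeg : 2 ≤ T.deg t := by
      rcases eq_or_ne t T.root with hroot | hne
      · rw [hroot]; exact hT.2.1
      · have := hT.2.2 t hleaf hne; omega
    have hstrict : t = T.root ∨ 3 ≤ T.deg t := by
      rcases eq_or_ne t T.root with hroot | hne
      · exact Or.inl hroot
      · exact Or.inr (hT.2.2 t hleaf hne)
    obtain ⟨c, hc, hcs, -⟩ := exists_offpath hdeg hstrict t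
    have hext := extend_path hc hcs
    have hanc : T.Anc w c := by
      rw [anc_iff, hext, SimpleGraph.Walk.mem_support_append_iff]
      exact Or.inl (anc_iff.mp ht)
    have hlen := hmax c hanc
    rw [hext] at hlen
    simp only [SimpleGraph.Walk.length_append, SimpleGraph.Walk.length_cons,
      SimpleGraph.Walk.length_nil] at hlen
    omega

lemma leaf_no_strict_desc (hT : T.Phylo) {v t : T.V} (hv : T.IsLeaf v) (h : T.Anc v t) :
    v = t := by
  by_contra hne
  have hvr : v ≠ T.root := by
    rintro rfl; exact hT.1 hv
  have hmem : v ∈ (T.pth T.root t).support := anc_iff.mp h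
  have hspec := (T.pth T.root t).take_spec hmem
  rw [takeUntil_pth, dropUntil_pth] at hspec
  -- first edge of pth v t
  obtain ⟨c₁, h1, q1, hq1⟩ := SimpleGraph.Walk.exists_eq_cons_of_ne hne (T.pth v t)
  -- last edge of pth root v, via the reverse walk
  obtain ⟨c₀, h0, q0, hq0⟩ :=
    SimpleGraph.Walk.exists_eq_cons_of_ne hvr (T.pth T.root v).reverse
  have hc₀ : c₀ ∈ (T.pth T.root v).support := by
    have : c₀ ∈ (T.pth T.root v).reverse.support := by rw [hq0]; simp
    rwa [SimpleGraph.Walk.support_reverse, List.mem_reverse] at this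
  have hc₁ : c₁ ∈ (T.pth v t).support.tail := by
    rw [hq1]
    simp
  have hnd := (T.pth_isPath T.root t).support_nodup
  rw [← hspec, SimpleGraph.Walk.support_append, List.nodup_append] at hnd
  have hne01 : c₀ ≠ c₁ := by
    intro hec
    subst hec
    exact hnd.2.2 _ hc₀ _ hc₁ rfl
  -- v has two distinct neighbors
  have h2 : 1 < (T.G.neighborSet v).ncard := by
    rw [Set.one_lt_ncard (Set.toFinite _)]
    exact ⟨c₀, h0, c₁, h1, hne01⟩
  have hle := (T.leaf_iff v).mp hv
  omega

lemma lca_unique {l l' : T.V} {S : Set T.V} (h1 : T.IsLcaSet l S) (h2 : T.IsLcaSet l' S) :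
    l = l' :=
  anc_antisymm (h2.2 l h1.1) (h1.2 l' h2.1)

lemma below_branch {u b t w : T.V} (h : T.G.Adj u b)
    (hd : T.pth T.root b
      = (T.pth T.root u).append (SimpleGraph.Walk.cons h SimpleGraph.Walk.nil))
    (hw : w ∈ (T.pth T.root t).support) (hbt : b ∈ (T.pth T.root t).support)
    (hwu : w ∉ (T.pth T.root u).support) : b ∈ (T.pth T.root w).support := by
  rcases mem_takeUntil_or (T.pth T.root t) hw hbt with hcase | hcase
  · rw [takeUntil_pth] at hcase
    rw [hd, SimpleGraph.Walk.mem_support_append_iff] at hcase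
    rcases hcase with hcase | hcase
    · exact absurd hcase hwu
    · simp only [SimpleGraph.Walk.support_cons, SimpleGraph.Walk.support_nil,
        List.mem_cons, List.not_mem_nil, or_false] at hcase
      rcases hcase with rfl | rfl
      · exact absurd (SimpleGraph.Walk.end_mem_support _) hwu
      · exact SimpleGraph.Walk.end_mem_support _
  · rw [takeUntil_pth] at hcase
    exact hcase

lemma key_pair (hT : T.Phylo) {u v : T.V} (huv : T.G.Adj u v) (hanc : T.Anc u v) :
    ∃ x y : X, x ≠ y ∧ T.IsLcaSet u {T.leaf x, T.leaf y} ∧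
      s(u, v) ∈ (T.pth u (T.leaf y)).edges ∧ (T.IsLeaf v → v = T.leaf y) := by
  have humem : u ∈ (T.pth T.root v).support := anc_iff.mp hanc
  have hdv : T.pth T.root v
      = (T.pth T.root u).append (SimpleGraph.Walk.cons huv SimpleGraph.Walk.nil) :=
    pth_decomp huv humem
  have hvnot : v ∉ (T.pth T.root u).support := end_not_mem_front huv humem
  have hu_not_leaf : ¬ T.IsLeaf u := by
    intro hl
    exact huv.ne (leaf_no_strict_desc hT hl (by
      rw [anc_iff, hdv, SimpleGraph.Walk.mem_support_append_iff]
      exact Or.inl (SimpleGraph.Walk.end_mem_support _)))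
  have hdeg2 : 2 ≤ T.deg u := by
    rcases eq_or_ne u T.root with hroot | hne
    · rw [hroot]; exact hT.2.1
    · have := hT.2.2 u hu_not_leaf hne; omega
  have hstrict : u = T.root ∨ 3 ≤ T.deg u := by
    rcases eq_or_ne u T.root with hroot | hne
    · exact Or.inl hroot
    · exact Or.inr (hT.2.2 u hu_not_leaf hne)
  obtain ⟨c, hc, hcsup, hcv⟩ := exists_offpath hdeg2 hstrict v
  have hdc := extend_path hc hcsup
  obtain ⟨x, hx⟩ := exists_leaf_below hT c
  obtain ⟨y, hy⟩ := exists_leaf_below hT v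
  have hcx : c ∈ (T.pth T.root (T.leaf x)).support := anc_iff.mp hx
  have hvy : v ∈ (T.pth T.root (T.leaf y)).support := anc_iff.mp hy
  have humem_c : u ∈ (T.pth T.root c).support := by
    rw [hdc, SimpleGraph.Walk.mem_support_append_iff]
    exact Or.inl (SimpleGraph.Walk.end_mem_support _)
  have hux : T.Anc u (T.leaf x) := by
    rw [anc_iff]
    have h1 := SimpleGraph.Walk.support_takeUntil_subset (T.pth T.root (T.leaf x)) hcx
    apply h1
    rwa [takeUntil_pth]
  have huy : T.Anc u (T.leaf y) := by
    rw [anc_iff]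
    have h1 := SimpleGraph.Walk.support_takeUntil_subset (T.pth T.root (T.leaf y)) hvy
    apply h1
    rwa [takeUntil_pth]
  have hsep : ∀ w : T.V, c ∈ (T.pth T.root w).support → v ∈ (T.pth T.root w).support →
      False := by
    intro w h1 h2
    rcases mem_takeUntil_or (T.pth T.root w) h1 h2 with hcase | hcase
    · rw [takeUntil_pth, hdv, SimpleGraph.Walk.mem_support_append_iff] at hcase
      rcases hcase with hcase | hcase
      · exact hcsup hcase
      · simp only [SimpleGraph.Walk.support_cons, SimpleGraph.Walk.support_nil,
          List.mem_cons, List.not_mem_nil, or_false] at hcase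
        rcases hcase with rfl | rfl
        · exact hc.ne rfl
        · exact hcv rfl
    · rw [takeUntil_pth, hdc, SimpleGraph.Walk.mem_support_append_iff] at hcase
      rcases hcase with hcase | hcase
      · exact hvnot hcase
      · simp only [SimpleGraph.Walk.support_cons, SimpleGraph.Walk.support_nil,
          List.mem_cons, List.not_mem_nil, or_false] at hcase
        rcases hcase with rfl | rfl
        · exact huv.ne rfl
        · exact hcv rfl
  have hxyv : T.leaf x ≠ T.leaf y := by
    intro he
    exact hsep (T.leaf x) hcx (by rw [he]; exact hvy)
  refine ⟨x, y, fun hxy => hxyv (congrArg T.leaf hxy), ?_, ?_, ?_⟩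
  · constructor
    · intro t ht
      rcases ht with rfl | ht
      · exact hux
      · rw [Set.mem_singleton_iff] at ht
        subst ht
        exact huy
    · intro w hw
      have h1 := anc_iff.mp (hw (T.leaf x) (by simp))
      have h2 := anc_iff.mp (hw (T.leaf y) (by simp))
      rw [anc_iff]
      by_contra hwu
      exact hsep w (below_branch hc hdc h1 hcx hwu) (below_branch huv hdv h2 hvy hwu)
  · have hvy' : v ∈ (T.pth u (T.leaf y)).support := by
      have hspec := (T.pth T.root (T.leaf y)).take_spec (anc_iff.mp huy)
      rw [takeUntil_pth, dropUntil_pth] at hspec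
      have h2 := hvy
      rw [← hspec, SimpleGraph.Walk.mem_support_append_iff] at h2
      rcases h2 with h2 | h2
      · exact absurd h2 hvnot
      · exact h2
    have hsub := SimpleGraph.Walk.edges_takeUntil_subset (T.pth u (T.leaf y)) hvy'
    apply hsub
    rw [takeUntil_pth, pth_adj huv]
    simp
  · intro hl
    exact leaf_no_strict_desc hT hl hy

lemma lca_exists (a b : T.V) : ∃ l, T.IsLcaSet l {a, b} := by
  have hCne : (T.root : T.V) ∈ {w : T.V | w ∈ (T.pth T.root a).support ∧
      w ∈ (T.pth T.root b).support} :=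
    ⟨SimpleGraph.Walk.start_mem_support _, SimpleGraph.Walk.start_mem_support _⟩
  obtain ⟨l, ⟨hla, hlb⟩, hmax⟩ := Set.exists_max_image
    {w : T.V | w ∈ (T.pth T.root a).support ∧ w ∈ (T.pth T.root b).support}
    (fun w => (T.pth T.root w).length) (Set.toFinite _) ⟨T.root, hCne⟩
  refine ⟨l, ?_, ?_⟩
  · rintro t ht
    rcases ht with rfl | ht
    · rwa [anc_iff]
    · rw [Set.mem_singleton_iff] at ht
      subst ht
      rwa [anc_iff]
  · intro w hw
    have hwa := anc_iff.mp (hw a (by simp))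
    have hwb := anc_iff.mp (hw b (by simp))
    rw [anc_iff]
    rcases mem_takeUntil_or (T.pth T.root a) hwa hla with hc | hc
    · rwa [takeUntil_pth] at hc
    · rw [takeUntil_pth] at hc
      -- l ∈ pth root w : derive l = w
      have hmem : w ∈ {w : T.V | w ∈ (T.pth T.root a).support ∧
          w ∈ (T.pth T.root b).support} := ⟨hwa, hwb⟩
      have h1 : (T.pth T.root l).length ≤ (T.pth T.root w).length := by
        have h2 := SimpleGraph.Walk.length_takeUntil_le (T.pth T.root w) hc
        rwa [takeUntil_pth] at h2
      have h2 := hmax w hmem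
      have hspec := (T.pth T.root w).take_spec hc
      rw [takeUntil_pth] at hspec
      have h3 := congrArg SimpleGraph.Walk.length hspec
      rw [SimpleGraph.Walk.length_append] at h3
      have h4 : ((T.pth T.root w).dropUntil l hc).length = 0 := by omega
      have h5 := SimpleGraph.Walk.eq_of_length_eq_zero h4
      rw [← h5]
      exact SimpleGraph.Walk.end_mem_support _

lemma adj_anc_or {a b : T.V} (h : T.G.Adj a b) : T.Anc a b ∨ T.Anc b a := by
  by_cases hb : b ∈ (T.pth T.root a).support
  · right; rwa [anc_iff]
  · left
    rw [anc_iff, extend_path h hb, SimpleGraph.Walk.mem_support_append_iff]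
    exact Or.inl (SimpleGraph.Walk.end_mem_support _)

end Tools

end RootedTree

section Contraction

open RootedTree

variable {X : Type} {T : RootedTree X} [DecidableEq T.V] {uu vv : T.V}

/-- Vertex set of the contracted tree. -/
def Vq (T : RootedTree X) (vv : T.V) : Type := {w : T.V // w ≠ vv}

noncomputable instance {T : RootedTree X} {vv : T.V} : Fintype (Vq T vv) := by
  classical
  unfold Vq
  infer_instance

instance {T : RootedTree X} {vv : T.V} [DecidableEq T.V] : DecidableEq (Vq T vv) := by
  unfold Vq
  infer_instance

/-- Contraction map. -/
def phiq (hne : uu ≠ vv) (w : T.V) : Vq T vv := if h : w = vv then ⟨uu, hne⟩ else ⟨w, h⟩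

variable (hne : uu ≠ vv)

lemma phiq_ne {w : T.V} (h : w ≠ vv) : phiq hne w = ⟨w, h⟩ := dif_neg h

lemma phiq_vv : phiq hne vv = ⟨uu, hne⟩ := dif_pos rfl

lemma phiq_eq_iff {w : T.V} {a : Vq T vv} :
    phiq hne w = a ↔ (w = a.1 ∨ (w = vv ∧ a.1 = uu)) := by
  constructor
  · intro h
    subst h
    by_cases h : w = vv
    · subst h; rw [phiq_vv]; exact Or.inr ⟨rfl, rfl⟩
    · rw [phiq_ne hne h]; exact Or.inl rfl
  · intro h
    rcases h with h | ⟨h1, h2⟩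
    · have hw : w ≠ vv := by rw [h]; exact a.2
      rw [phiq_ne hne hw]
      exact Subtype.ext h
    · subst h1
      rw [phiq_vv]
      exact Subtype.ext h2.symm

lemma phiq_fiber {w w' : T.V} (h : phiq hne w = phiq hne w') :
    w = w' ∨ (w = uu ∧ w' = vv) ∨ (w = vv ∧ w' = uu) := by
  by_cases h1 : w = vv <;> by_cases h2 : w' = vv
  · exact Or.inl (h1.trans h2.symm)
  · rw [h1, phiq_vv, phiq_ne hne h2] at h
    have := (Subtype.ext_iff.mp h)
    exact Or.inr (Or.inr ⟨h1, this.symm⟩)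
  · rw [h2, phiq_vv, phiq_ne hne h1] at h
    have := (Subtype.ext_iff.mp h)
    exact Or.inr (Or.inl ⟨this, h2⟩)
  · rw [phiq_ne hne h1, phiq_ne hne h2] at h
    exact Or.inl (Subtype.ext_iff.mp h)

/-- The contracted graph. -/
def Gq (hne : uu ≠ vv) : SimpleGraph (Vq T vv) where
  Adj a b := a ≠ b ∧ ∃ p q : T.V, T.G.Adj p q ∧ phiq hne p = a ∧ phiq hne q = b
  symm := by
    constructor
    rintro a b ⟨h, p, q, hpq, hp, hq⟩
    exact ⟨Ne.symm h, q, p, hpq.symm, hq, hp⟩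
  loopless := by constructor; rintro a ⟨h, -⟩; exact h rfl

lemma no_triangle {a b c : T.V} (h1 : T.G.Adj a b) (h2 : T.G.Adj b c)
    (h3 : T.G.Adj a c) : False := by
  have p1 : (SimpleGraph.Walk.cons h3 SimpleGraph.Walk.nil : T.G.Walk a c).IsPath :=
    cons_nil_path h3
  have p2 : (SimpleGraph.Walk.cons h1 (SimpleGraph.Walk.cons h2 SimpleGraph.Walk.nil) :
      T.G.Walk a c).IsPath := by
    simp [SimpleGraph.Walk.isPath_def, h1.ne, h2.ne, h3.ne]
  have hEq := (T.pth_eq _ p1).trans (T.pth_eq _ p2).symm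
  have := congrArg SimpleGraph.Walk.length hEq
  simp at this

lemma phiq_adj {a b : T.V} (hab : T.G.Adj a b) (hq : phiq hne a ≠ phiq hne b) :
    (Gq hne).Adj (phiq hne a) (phiq hne b) :=
  ⟨hq, a, b, hab, rfl, rfl⟩

/-- Projection of a walk to the contracted graph. -/
def projWalk (hne : uu ≠ vv) : ∀ {a b : T.V}, T.G.Walk a b →
    (Gq hne).Walk (phiq hne a) (phiq hne b)
  | _, _, SimpleGraph.Walk.nil => SimpleGraph.Walk.nil
  | _, _, SimpleGraph.Walk.cons h p =>
    if heq : phiq hne _ = phiq hne _ then (projWalk hne p).copy heq.symm rfl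
    else SimpleGraph.Walk.cons (phiq_adj hne h heq) (projWalk hne p)

lemma projWalk_support : ∀ {a b : T.V} (p : T.G.Walk a b) (w' : Vq T vv),
    w' ∈ (projWalk hne p).support ↔ ∃ w ∈ p.support, phiq hne w = w' := by
  intro a b p
  induction p with
  | nil =>
    intro w'
    simp [projWalk]
    exact comm
  | cons h p ih =>
    intro w'
    rw [projWalk]
    split
    · rename_i heq
      rw [SimpleGraph.Walk.support_copy, ih]
      constructor
      · rintro ⟨w, hw, rfl⟩
        exact ⟨w, by simp [hw], rfl⟩
      · rintro ⟨w, hw, rfl⟩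
        simp only [SimpleGraph.Walk.support_cons, List.mem_cons] at hw
        rcases hw with rfl | hw
        · exact ⟨_, SimpleGraph.Walk.start_mem_support _, heq.symm⟩
        · exact ⟨w, hw, rfl⟩
    · rename_i heq
      rw [SimpleGraph.Walk.support_cons, List.mem_cons, ih]
      constructor
      · rintro (rfl | ⟨w, hw, rfl⟩)
        · exact ⟨_, SimpleGraph.Walk.start_mem_support _, rfl⟩
        · exact ⟨w, by simp [hw], rfl⟩
      · rintro ⟨w, hw, rfl⟩
        simp only [SimpleGraph.Walk.support_cons, List.mem_cons] at hw
        rcases hw with rfl | hw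
        · exact Or.inl rfl
        · exact Or.inr ⟨w, hw, rfl⟩

variable (huv : T.G.Adj uu vv)

lemma long_uv_path_absurd (huv : T.G.Adj uu vv) {c : T.V} (q : T.G.Walk c vv)
    (hq : q.IsPath) (hadj : T.G.Adj uu c) (hcv : c ≠ vv) (huu : uu ∉ q.support) :
    False := by
  have hpath : (SimpleGraph.Walk.cons hadj q).IsPath := hq.cons huu
  have h1 := T.pth_eq _ hpath
  have h2 := T.pth_eq _ (cons_nil_path huv)
  have h3 := congrArg SimpleGraph.Walk.length (h1.trans h2.symm)
  simp only [SimpleGraph.Walk.length_cons, SimpleGraph.Walk.length_nil] at h3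
  have h4 : q.length = 0 := by omega
  exact hcv (SimpleGraph.Walk.eq_of_length_eq_zero h4)

lemma projWalk_isPath : ∀ {a b : T.V} (p : T.G.Walk a b), p.IsPath →
    (projWalk huv.ne p).IsPath := by
  intro a b p
  induction p with
  | nil => rw [projWalk]; intro _; exact SimpleGraph.Walk.IsPath.nil
  | @cons a c b' h p ih =>
    intro hp
    rw [SimpleGraph.Walk.cons_isPath_iff] at hp
    rw [projWalk]
    split
    · rename_i heq
      rw [SimpleGraph.Walk.isPath_copy]
      exact ih hp.1
    · rename_i heq
      rw [SimpleGraph.Walk.cons_isPath_iff]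
      refine ⟨ih hp.1, ?_⟩
      intro hmem
      rw [projWalk_support] at hmem
      obtain ⟨w, hw, hphi⟩ := hmem
      rcases phiq_fiber huv.ne hphi with h1 | ⟨h1, h2⟩ | ⟨h1, h2⟩
      · exact hp.2 (h1 ▸ hw)
      · -- w = uu ∈ p.support, a = vv
        have hcu : c ≠ uu := by
          intro hcu
          exact heq (by rw [h2, hcu, phiq_vv, phiq_ne huv.ne huv.ne])
        have hw' : uu ∈ p.support := h1 ▸ hw
        refine long_uv_path_absurd huv.symm (p.takeUntil uu hw') (hp.1.takeUntil hw')
          (h2 ▸ h) hcu ?_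
        intro hvmem
        exact hp.2 (h2 ▸ SimpleGraph.Walk.support_takeUntil_subset _ hw' hvmem)
      · -- w = vv ∈ p.support, a = uu
        have hcv : c ≠ vv := by
          intro hcv
          exact heq (by rw [h2, hcv, phiq_vv, phiq_ne huv.ne huv.ne])
        have hw' : vv ∈ p.support := h1 ▸ hw
        refine long_uv_path_absurd huv (p.takeUntil vv hw') (hp.1.takeUntil hw')
          (h2 ▸ h) hcv ?_
        intro humem
        exact hp.2 (h2 ▸ SimpleGraph.Walk.support_takeUntil_subset _ hw' humem)

lemma edge_ne_of_phiq_ne {a c : T.V} (heq : phiq huv.ne a ≠ phiq huv.ne c) :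
    s(a, c) ≠ s(uu, vv) := by
  intro hs
  rw [Sym2.eq_iff] at hs
  rcases hs with ⟨rfl, rfl⟩ | ⟨rfl, rfl⟩
  · exact heq (by rw [phiq_vv]; exact (phiq_ne huv.ne huv.ne).trans rfl)
  · exact heq (by rw [phiq_vv, phiq_ne huv.ne huv.ne])

lemma phiq_eq_of_edge_eq {a c : T.V} (hadj : T.G.Adj a c) (hs : s(a, c) = s(uu, vv)) :
    phiq huv.ne a = phiq huv.ne c := by
  rw [Sym2.eq_iff] at hs
  rcases hs with ⟨rfl, rfl⟩ | ⟨rfl, rfl⟩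
  · rw [phiq_vv, phiq_ne huv.ne huv.ne]
  · rw [phiq_vv, phiq_ne huv.ne huv.ne]

lemma projWalk_edges_sub : ∀ {a b : T.V} (p : T.G.Walk a b) {e' : Sym2 (Vq T vv)},
    e' ∈ (projWalk huv.ne p).edges →
    ∃ e₀ ∈ p.edges, e₀ ≠ s(uu, vv) ∧ e' = Sym2.map (phiq huv.ne) e₀ := by
  intro a b p
  induction p with
  | nil => intro e' he'; rw [projWalk] at he'; simp at he'
  | cons h p ih =>
    rename_i a c b'
    intro e' he'
    rw [projWalk] at he'
    split at he'
    · rename_i heq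
      rw [SimpleGraph.Walk.edges_copy] at he'
      obtain ⟨e₀, h1, h2, h3⟩ := ih he'
      exact ⟨e₀, by simp [h1], h2, h3⟩
    · rename_i heq
      rw [SimpleGraph.Walk.edges_cons, List.mem_cons] at he'
      rcases he' with rfl | he'
      · refine ⟨s(a, c), by simp, edge_ne_of_phiq_ne huv heq, ?_⟩
        rw [Sym2.map_pair_eq]
      · obtain ⟨e₀, h1, h2, h3⟩ := ih he'
        exact ⟨e₀, by simp [h1], h2, h3⟩

lemma projWalk_edges_mem : ∀ {a b : T.V} (p : T.G.Walk a b) {e₀ : Sym2 T.V},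
    e₀ ∈ p.edges → e₀ ≠ s(uu, vv) →
    Sym2.map (phiq huv.ne) e₀ ∈ (projWalk huv.ne p).edges := by
  intro a b p
  induction p with
  | nil => intro e₀ he _; simp at he
  | cons h p ih =>
    rename_i a c b'
    intro e₀ he hne0
    rw [SimpleGraph.Walk.edges_cons, List.mem_cons] at he
    rw [projWalk]
    split
    · rename_i heq
      rw [SimpleGraph.Walk.edges_copy]
      rcases he with rfl | he
      · rcases phiq_fiber huv.ne heq with h1 | ⟨h1, h2⟩ | ⟨h1, h2⟩
        · exact (T.G.ne_of_adj h h1).elim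
        · exact (hne0 (by rw [h1, h2])).elim
        · exact (hne0 (by rw [h1, h2]; exact Sym2.eq_swap)).elim
      · exact ih he hne0
    · rename_i heq
      rw [SimpleGraph.Walk.edges_cons, List.mem_cons]
      rcases he with rfl | he
      · left; rw [Sym2.map_pair_eq]
      · right; exact ih he hne0

lemma Gq_connected : (Gq huv.ne : SimpleGraph (Vq T vv)).Connected := by
  rw [SimpleGraph.connected_iff]
  constructor
  · intro a b
    have hpa : phiq huv.ne a.1 = a := by
      rw [phiq_ne huv.ne a.2]
      exact Subtype.ext rfl
    have hpb : phiq huv.ne b.1 = b := by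
      rw [phiq_ne huv.ne b.2]
      exact Subtype.ext rfl
    
    exact ⟨(projWalk huv.ne (T.pth a.1 b.1)).copy hpa hpb⟩
  · exact ⟨⟨uu, huv.ne⟩⟩

lemma fiber_walk {a₀ : T.V} {x' : Vq T vv} (h : phiq huv.ne a₀ = x') :
    ∃ W : T.G.Walk x'.1 a₀, ∀ f ∈ W.edges, f = s(uu, vv) := by
  rcases (phiq_eq_iff huv.ne).mp h with h1 | ⟨h1, h2⟩
  · exact ⟨(SimpleGraph.Walk.nil : T.G.Walk x'.1 x'.1).copy rfl h1.symm, by simp⟩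
  · refine ⟨(SimpleGraph.Walk.cons huv SimpleGraph.Walk.nil).copy h2.symm h1.symm, ?_⟩
    simp

lemma liftWalkAvoid (F : Sym2 T.V) (hFe : F ≠ s(uu, vv)) :
    ∀ {x' y' : Vq T vv} (W' : (Gq huv.ne).Walk x' y'),
      Sym2.map (phiq huv.ne) F ∉ W'.edges → ∃ W : T.G.Walk x'.1 y'.1, F ∉ W.edges := by
  intro x' y' W'
  induction W' with
  | nil => intro _; exact ⟨SimpleGraph.Walk.nil, by simp⟩
  | cons h W₂ ih =>
    rename_i x' c' y'
    intro hmem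
    rw [SimpleGraph.Walk.edges_cons, List.mem_cons] at hmem
    push_neg at hmem
    obtain ⟨W₂', hW₂'⟩ := ih hmem.2
    obtain ⟨hne', p, q, hpq, hp, hq⟩ := h
    obtain ⟨WA, hWA⟩ := fiber_walk huv hp
    obtain ⟨WB, hWB⟩ := fiber_walk huv hq
    refine ⟨(WA.append (SimpleGraph.Walk.cons hpq WB.reverse)).append W₂', ?_⟩
    intro hFin
    rw [SimpleGraph.Walk.edges_append] at hFin
    rcases List.mem_append.mp hFin with hF1 | hF1
    · rw [SimpleGraph.Walk.edges_append] at hF1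
      rcases List.mem_append.mp hF1 with hF2 | hF2
      · exact hFe (hWA F hF2)
      · rw [SimpleGraph.Walk.edges_cons] at hF2
        rcases List.mem_cons.mp hF2 with hF3 | hF3
        · subst hF3
          exact hmem.1 (by rw [Sym2.map_pair_eq, hp, hq])
        · rw [SimpleGraph.Walk.edges_reverse, List.mem_reverse] at hF3
          exact hFe (hWB F hF3)
    · exact hW₂' hF1

lemma Gq_acyclic : (Gq huv.ne : SimpleGraph (Vq T vv)).IsAcyclic := by
  rw [SimpleGraph.isAcyclic_iff_forall_adj_isBridge]
  intro x' y' hadj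
  rw [SimpleGraph.isBridge_iff_adj_and_forall_walk_mem_edges]
  refine fun W' => ?_
  by_contra hmem
  obtain ⟨hne', p, q, hpq, hp, hq⟩ := hadj
  have hF : s(p, q) ≠ s(uu, vv) := by
    intro hs
    exact hne' (hp ▸ hq ▸ phiq_eq_of_edge_eq huv hpq hs)
  obtain ⟨W, hW⟩ := liftWalkAvoid huv s(p, q) hF W' (by
    rw [Sym2.map_pair_eq, hp, hq]; exact hmem)
  obtain ⟨WA, hWA⟩ := fiber_walk huv hp
  obtain ⟨WB, hWB⟩ := fiber_walk huv hq
  have hbridge := (SimpleGraph.isAcyclic_iff_forall_adj_isBridge.mp T.isTree.IsAcyclic) hpq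
  rw [SimpleGraph.isBridge_iff_adj_and_forall_walk_mem_edges] at hbridge
  have hin := hbridge ((WA.reverse.append W).append WB)
  rw [SimpleGraph.Walk.edges_append] at hin
  rcases List.mem_append.mp hin with h1 | h1
  · rw [SimpleGraph.Walk.edges_append] at h1
    rcases List.mem_append.mp h1 with h2 | h2
    · rw [SimpleGraph.Walk.edges_reverse, List.mem_reverse] at h2
      exact hF (hWA _ h2)
    · exact hW h2
  · exact hF (hWB _ h1)

lemma phiq_sec (a : Vq T vv) : phiq hne a.1 = a := by
  rw [phiq_ne hne a.2]
  exact Subtype.ext rfl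

lemma phiq_val {w : T.V} (h : w ≠ vv) : (phiq hne w).1 = w := by
  rw [phiq_ne hne h]

lemma nbrq_ne (a : Vq T vv) (ha : a.1 ≠ uu) :
    (Gq huv.ne).neighborSet a = phiq huv.ne '' (T.G.neighborSet a.1) := by
  ext b
  constructor
  · rintro ⟨hne', p, q, hpq, hp, hq⟩
    rcases (phiq_eq_iff huv.ne).mp hp with h1 | ⟨h1, h2⟩
    · exact ⟨q, h1 ▸ hpq, hq⟩
    · exact absurd h2 ha
  · rintro ⟨q, hq, rfl⟩
    refine ⟨?_, a.1, q, hq, phiq_sec huv.ne a, rfl⟩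
    intro hEq
    rcases (phiq_eq_iff huv.ne).mp hEq.symm with h1 | ⟨h1, h2⟩
    · exact T.G.ne_of_adj hq h1.symm
    · exact ha h2

lemma nbrq_card_ne (a : Vq T vv) (ha : a.1 ≠ uu) :
    ((Gq huv.ne).neighborSet a).ncard = T.deg a.1 := by
  rw [nbrq_ne huv a ha]
  apply Set.ncard_image_of_injOn
  intro x hx y hy hxy
  rcases phiq_fiber huv.ne hxy with h | ⟨h1, h2⟩ | ⟨h1, h2⟩
  · exact h
  · exact absurd huv (fun h3 => no_triangle (h1 ▸ hx) h3 (h2 ▸ hy))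
  · exact absurd huv (fun h3 => no_triangle (h2 ▸ hy) h3 (h1 ▸ hx))

lemma nbrq_uu :
    (Gq huv.ne).neighborSet ⟨uu, huv.ne⟩
      = phiq huv.ne '' ((T.G.neighborSet uu ∪ T.G.neighborSet vv) \ {uu, vv}) := by
  ext b
  constructor
  · rintro ⟨hne', p, q, hpq, hp, hq⟩
    have hquu : q ≠ uu := by
      rintro rfl
      exact hne' (by rw [← hq, phiq_ne huv.ne huv.ne])
    have hqvv : q ≠ vv := by
      rintro rfl
      exact hne' (by rw [← hq, phiq_vv])
    rcases (phiq_eq_iff huv.ne).mp hp with h1 | ⟨h1, h2⟩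
    · have hpq' : T.G.Adj uu q := (show p = uu from h1) ▸ hpq
      exact ⟨q, ⟨Or.inl hpq', by simp [hquu, hqvv]⟩, hq⟩
    · have hpq' : T.G.Adj vv q := h1 ▸ hpq
      exact ⟨q, ⟨Or.inr hpq', by simp [hquu, hqvv]⟩, hq⟩
  · rintro ⟨q, ⟨hqm, hqn⟩, rfl⟩
    simp only [Set.mem_insert_iff, Set.mem_singleton_iff, not_or] at hqn
    have hne' : (⟨uu, huv.ne⟩ : Vq T vv) ≠ phiq huv.ne q := by
      intro hEq
      rcases (phiq_eq_iff huv.ne).mp hEq.symm with h1 | ⟨h1, h2⟩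
      · exact hqn.1 (by rw [h1])
      · exact hqn.2 h1
    rcases hqm with hq1 | hq1
    · exact ⟨hne', uu, q, hq1, phiq_ne huv.ne huv.ne, rfl⟩
    · exact ⟨hne', vv, q, hq1, phiq_vv huv.ne, rfl⟩

lemma nbrq_card_uu :
    ((Gq huv.ne).neighborSet ⟨uu, huv.ne⟩).ncard = T.deg uu + T.deg vv - 2 := by
  rw [nbrq_uu huv]
  rw [Set.ncard_image_of_injOn]
  · have hsplit : (T.G.neighborSet uu ∪ T.G.neighborSet vv) \ {uu, vv}
        = (T.G.neighborSet uu \ {vv}) ∪ (T.G.neighborSet vv \ {uu}) := by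
      ext x
      simp only [Set.mem_diff, Set.mem_union, Set.mem_insert_iff, Set.mem_singleton_iff,
        not_or]
      constructor
      · rintro ⟨h1 | h1, h2, h3⟩
        · exact Or.inl ⟨h1, h3⟩
        · exact Or.inr ⟨h1, h2⟩
      · rintro (⟨h1, h2⟩ | ⟨h1, h2⟩)
        · exact ⟨Or.inl h1, fun hx => T.G.irrefl (hx ▸ h1), h2⟩
        · exact ⟨Or.inr h1, h2, fun hx => T.G.irrefl (hx ▸ h1)⟩
    have hdisj : Disjoint (T.G.neighborSet uu \ {vv}) (T.G.neighborSet vv \ {uu}) := by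
      rw [Set.disjoint_left]
      rintro x ⟨hx1, -⟩ ⟨hx2, -⟩
      exact no_triangle hx1 hx2.symm huv
    rw [hsplit, Set.ncard_union_eq hdisj (Set.toFinite _) (Set.toFinite _)]
    rw [Set.ncard_diff_singleton_of_mem (by exact huv),
      Set.ncard_diff_singleton_of_mem (by exact huv.symm)]
    have h1 : 0 < (T.G.neighborSet uu).ncard :=
      (Set.ncard_pos (Set.toFinite _)).mpr ⟨vv, huv⟩
    have h2 : 0 < (T.G.neighborSet vv).ncard :=
      (Set.ncard_pos (Set.toFinite _)).mpr ⟨uu, huv.symm⟩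
    have : T.deg uu = (T.G.neighborSet uu).ncard := rfl
    have : T.deg vv = (T.G.neighborSet vv).ncard := rfl
    omega
  · rintro x ⟨-, hx⟩ y ⟨-, hy⟩ hxy
    simp only [Set.mem_insert_iff, Set.mem_singleton_iff, not_or] at hx hy
    rcases phiq_fiber huv.ne hxy with h | ⟨h1, h2⟩ | ⟨h1, h2⟩
    · exact h
    · exact absurd h1 hx.1
    · exact absurd h1 hx.2

lemma vv_ne_root (huv : T.G.Adj uu vv) (hanc : T.Anc uu vv) : vv ≠ T.root := by
  intro h
  have h2 := anc_iff.mp hanc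
  rw [h, pth_self] at h2
  simp only [SimpleGraph.Walk.support_nil, List.mem_singleton] at h2
  exact huv.ne (h2.trans h.symm)

lemma uu_not_leaf (huv : T.G.Adj uu vv) (hT : T.Phylo) (hanc : T.Anc uu vv) : ¬ T.IsLeaf uu := by
  intro hl
  exact huv.ne (leaf_no_strict_desc hT hl hanc)

lemma deg_vv_ge (huv : T.G.Adj uu vv) (hT : T.Phylo) (hanc : T.Anc uu vv) (hvleaf : ¬ T.IsLeaf vv) :
    3 ≤ T.deg vv := hT.2.2 vv hvleaf (vv_ne_root huv hanc)

lemma deg_uu_ge (huv : T.G.Adj uu vv) (hT : T.Phylo) (hanc : T.Anc uu vv) : 2 ≤ T.deg uu := by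
  rcases eq_or_ne uu T.root with h | h
  · rw [h]; exact hT.2.1
  · have := hT.2.2 uu (uu_not_leaf huv hT hanc) h; omega

/-- The contracted rooted tree. -/
noncomputable def Tq (huv : T.G.Adj uu vv) (hT : T.Phylo) (hanc : T.Anc uu vv)
    (hvleaf : ¬ T.IsLeaf vv) : RootedTree X where
  V := Vq T vv
  fintypeV := inferInstance
  G := Gq huv.ne
  isTree := ⟨Gq_connected huv, Gq_acyclic huv⟩
  root := phiq huv.ne T.root
  leaf := fun x => phiq huv.ne (T.leaf x)
  leaf_inj := by
    intro x y h
    rcases phiq_fiber huv.ne h with h1 | ⟨h1, h2⟩ | ⟨h1, h2⟩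
    · exact T.leaf_inj h1
    · exact absurd ⟨y, h2⟩ hvleaf
    · exact absurd ⟨x, h1⟩ hvleaf
  leaf_iff := by
    intro w'
    by_cases hwu : w'.1 = uu
    · have hw' : w' = ⟨uu, huv.ne⟩ := Subtype.ext hwu
      rw [hw']
      apply iff_of_false
      · rintro ⟨x, hx⟩
        rcases (phiq_eq_iff huv.ne).mp hx with h1 | ⟨h1, h2⟩
        · exact uu_not_leaf huv hT hanc ⟨x, h1⟩
        · exact hvleaf ⟨x, h1⟩
      · rw [nbrq_card_uu huv]
        have h1 := deg_uu_ge huv hT hanc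
        have h2 := deg_vv_ge huv hT hanc hvleaf
        omega
    · rw [nbrq_card_ne huv w' hwu]
      refine Iff.trans ?_ (T.leaf_iff w'.1)
      constructor
      · rintro ⟨x, hx⟩
        rcases (phiq_eq_iff huv.ne).mp hx with h1 | ⟨h1, h2⟩
        · exact ⟨x, h1⟩
        · exact absurd h2 hwu
      · rintro ⟨x, hx⟩
        refine ⟨x, ?_⟩
        show phiq huv.ne (T.leaf x) = w'
        rw [hx]
        exact phiq_sec huv.ne w'


variable (hT : T.Phylo) (hanc : T.Anc uu vv) (hvleaf : ¬ T.IsLeaf vv)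

lemma Tq_isLeaf_iff {w' : (Tq huv hT hanc hvleaf).V} (hwu : w'.1 ≠ uu) :
    (Tq huv hT hanc hvleaf).IsLeaf w' ↔ T.IsLeaf w'.1 := by
  constructor
  · rintro ⟨x, hx⟩
    rcases (phiq_eq_iff huv.ne).mp hx with h1 | ⟨h1, h2⟩
    · exact ⟨x, h1⟩
    · exact absurd h2 hwu
  · rintro ⟨x, hx⟩
    refine ⟨x, ?_⟩
    show phiq huv.ne (T.leaf x) = w'
    rw [show T.leaf x = w'.1 from hx]
    exact phiq_sec huv.ne w'


lemma Tq_root_val : (Tq huv hT hanc hvleaf).root = ⟨T.root, Ne.symm (vv_ne_root huv hanc)⟩ := by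
  show phiq huv.ne T.root = _
  rw [phiq_ne huv.ne (Ne.symm (vv_ne_root huv hanc))]

lemma Tq_phylo : (Tq huv hT hanc hvleaf).Phylo := by
  refine ⟨?_, ?_, ?_⟩
  · rintro ⟨x, hx⟩
    rcases (phiq_eq_iff huv.ne).mp hx with h1 | ⟨h1, h2⟩
    · rw [Tq_root_val] at h1
      exact hT.1 ⟨x, h1⟩
    · exact hvleaf ⟨x, h1⟩
  · show 2 ≤ ((Gq huv.ne).neighborSet (phiq huv.ne T.root)).ncard
    by_cases hru : T.root = uu
    · have : phiq huv.ne T.root = ⟨uu, huv.ne⟩ := by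
        rw [hru, phiq_ne huv.ne huv.ne]
      rw [this, nbrq_card_uu huv]
      have h1 := deg_uu_ge huv hT hanc
      have h2 := deg_vv_ge huv hT hanc hvleaf
      omega
    · have hval : (phiq huv.ne T.root).1 = T.root := phiq_val huv.ne (Ne.symm (vv_ne_root huv hanc))
      rw [nbrq_card_ne huv _ (by rw [hval]; exact hru), hval]
      exact hT.2.1
  · intro w' hwleaf hwroot
    show 3 ≤ ((Gq huv.ne).neighborSet w').ncard
    by_cases hwu : w'.1 = uu
    · have : w' = ⟨uu, huv.ne⟩ := Subtype.ext hwu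
      rw [this, nbrq_card_uu huv]
      have h1 := deg_uu_ge huv hT hanc
      have h2 := deg_vv_ge huv hT hanc hvleaf
      omega
    · rw [nbrq_card_ne huv w' hwu]
      apply hT.2.2 w'.1
      · rw [← Tq_isLeaf_iff huv hT hanc hvleaf hwu]
        exact hwleaf
      · intro hr
        apply hwroot
        have : phiq huv.ne w'.1 = w' := phiq_sec huv.ne w'
        rw [← this, hr]
        rfl
  
lemma Tq_contractionMap : IsContractionMap T (Tq huv hT hanc hvleaf) (phiq huv.ne) := by
  constructor
  · intro a
    exact ⟨a.1, phiq_sec huv.ne a⟩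
  · rfl
  · intro x; rfl
  · intro a b hab
    by_cases h : phiq huv.ne a = phiq huv.ne b
    · exact Or.inl h
    · exact Or.inr ⟨h, a, b, hab, rfl, rfl⟩
  · rintro a b ⟨h, p, q, hpq, hp, hq⟩
    exact ⟨p, q, hpq, hp, hq⟩
  · intro w'
    rw [SimpleGraph.connected_iff]
    constructor
    · rintro ⟨a, ha⟩ ⟨b, hb⟩
      have hmem : ∀ c : T.V, phiq huv.ne c = w' → c = w'.1 ∨ (c = vv ∧ w'.1 = uu) :=
        fun c hc => (phiq_eq_iff huv.ne).mp hc
      rcases hmem a ha with h1 | ⟨h1, h2⟩ <;> rcases hmem b hb with h3 | ⟨h3, h4⟩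
      · have : (⟨a, ha⟩ : {c : T.V // phiq huv.ne c = w'}) = ⟨b, hb⟩ :=
          Subtype.ext (h1.trans h3.symm)
        obtain rfl : a = b := h1.trans h3.symm
        exact SimpleGraph.Reachable.refl _
      · -- a = w'.1 = uu, b = vv
        have hadj : T.G.Adj a b := by
          rw [h1, h4, h3]; exact huv
        exact SimpleGraph.Adj.reachable (by simpa using hadj)
      · have hadj : T.G.Adj a b := by
          rw [h1, h3, h2]; exact huv.symm
        exact SimpleGraph.Adj.reachable (by simpa using hadj)
      · have : (⟨a, ha⟩ : {c : T.V // phiq huv.ne c = w'}) = ⟨b, hb⟩ :=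
          Subtype.ext (h1.trans h3.symm)
        obtain rfl : a = b := h1.trans h3.symm
        exact SimpleGraph.Reachable.refl _
    · exact ⟨⟨w'.1, phiq_sec huv.ne w'⟩⟩

lemma phiq_not_injective : ¬ Function.Injective (phiq huv.ne : T.V → Vq T vv) := by
  intro hinj
  have h : phiq huv.ne uu = phiq huv.ne vv := by
    rw [phiq_vv, phiq_ne huv.ne huv.ne]
  exact huv.ne (hinj h)

/-- Swap back: section of `phiq` hitting the lower vertex when needed. -/
def swq (hne : uu ≠ vv) (a : Vq T vv) : T.V := if a.1 = uu then vv else a.1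

lemma phiq_swq (a : Vq T vv) : phiq hne (swq hne a) = a := by
  unfold swq
  split
  · rename_i h
    rw [phiq_vv]
    exact Subtype.ext h.symm
  · exact phiq_sec hne a

open Classical in
/-- Lift of an edge of the contracted graph. -/
noncomputable def Liftq (hne : uu ≠ vv) : Sym2 (Vq T vv) → Sym2 T.V :=
  Sym2.lift ⟨fun a b => if T.G.Adj a.1 b.1 then s(a.1, b.1) else s(swq hne a, swq hne b),
    by
      intro a b
      dsimp only
      by_cases h : T.G.Adj a.1 b.1
      · rw [if_pos h, if_pos h.symm]
        exact Sym2.eq_swap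
      · rw [if_neg h, if_neg (fun hh => h hh.symm)]
        exact Sym2.eq_swap⟩

lemma liftq_proj {a b : T.V} (hab : T.G.Adj a b) (hE : s(a, b) ≠ s(uu, vv)) :
    Liftq huv.ne (Sym2.map (phiq huv.ne) s(a, b)) = s(a, b) := by
  rw [Sym2.map_pair_eq]
  unfold Liftq
  rw [Sym2.lift_mk]
  dsimp only
  by_cases hva : a = vv
  · have hbu : b ≠ uu := by
      intro h
      exact hE (by rw [hva, h]; exact Sym2.eq_swap)
    have hbv : b ≠ vv := fun h => T.G.ne_of_adj hab (hva.trans h.symm)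
    rw [hva, phiq_vv, phiq_ne huv.ne hbv]
    have hnadj : ¬ T.G.Adj (⟨uu, huv.ne⟩ : Vq T vv).1 (⟨b, hbv⟩ : Vq T vv).1 := by
      intro h
      exact no_triangle h (hva ▸ hab).symm huv
    rw [if_neg hnadj]
    show s(if uu = uu then vv else uu, if b = uu then vv else b) = _
    rw [if_pos rfl, if_neg hbu]
  · by_cases hvb : b = vv
    · have hau : a ≠ uu := by
        intro h
        exact hE (by rw [hvb, h])
      rw [hvb, phiq_vv, phiq_ne huv.ne hva]
      have hnadj : ¬ T.G.Adj (⟨a, hva⟩ : Vq T vv).1 (⟨uu, huv.ne⟩ : Vq T vv).1 := by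
        intro h
        exact no_triangle h huv (hvb ▸ hab)
      rw [if_neg hnadj]
      show s(if a = uu then vv else a, if uu = uu then vv else uu) = _
      rw [if_neg hau, if_pos rfl]
    · rw [phiq_ne huv.ne hva, phiq_ne huv.ne hvb]
      rw [if_pos]
      exact hab

lemma liftq_proj' {e₀ : Sym2 T.V} (hE : e₀ ∈ T.G.edgeSet) (hne0 : e₀ ≠ s(uu, vv)) :
    Liftq huv.ne (Sym2.map (phiq huv.ne) e₀) = e₀ := by
  induction e₀ using Sym2.ind with
  | _ a b => exact liftq_proj huv (by exact hE) hne0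

/-- The transported labeling. -/
noncomputable def lamq {M : Type} (hne : uu ≠ vv) (μ : Sym2 T.V → Option M) :
    Sym2 (Vq T vv) → Option M := fun e' => μ (Liftq hne e')

section Transfer

variable {M : Type} (μ : Sym2 T.V → Option M)

lemma projWalk_pth (a b : T.V) :
    (Tq huv hT hanc hvleaf).pth (phiq huv.ne a) (phiq huv.ne b)
      = projWalk huv.ne (T.pth a b) :=
  ((Tq huv hT hanc hvleaf).pth_eq (projWalk huv.ne (T.pth a b))
    (projWalk_isPath huv _ (T.pth_isPath a b))).symm

lemma Tq_anc_iff {w' : Vq T vv} {b : T.V} :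
    (Tq huv hT hanc hvleaf).Anc w' (phiq huv.ne b)
      ↔ ∃ w ∈ (T.pth T.root b).support, phiq huv.ne w = w' := by
  rw [anc_iff (T := Tq huv hT hanc hvleaf) (u := w') (v := phiq huv.ne b)]
  have hroot : (Tq huv hT hanc hvleaf).root = phiq huv.ne T.root := rfl
  rw [hroot, projWalk_pth huv hT hanc hvleaf]
  exact projWalk_support huv.ne (T.pth T.root b) w'

lemma anc_phiq {w b : T.V} (h : T.Anc w b) :
    (Tq huv hT hanc hvleaf).Anc (phiq huv.ne w) (phiq huv.ne b) :=
  (Tq_anc_iff huv hT hanc hvleaf).mpr ⟨w, anc_iff.mp h, rfl⟩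

lemma anc_anc_mem {w b t : T.V} (hwb : T.Anc w b) (hb : b ∈ (T.pth T.root t).support) :
    w ∈ (T.pth T.root t).support := by
  have h1 := anc_iff.mp hwb
  rw [← takeUntil_pth hb] at h1
  exact SimpleGraph.Walk.support_takeUntil_subset _ hb h1

lemma lca_phiq {l : T.V} {x y : X} (hl : T.IsLcaSet l {T.leaf x, T.leaf y}) :
    (Tq huv hT hanc hvleaf).IsLcaSet (phiq huv.ne l)
      {(Tq huv hT hanc hvleaf).leaf x, (Tq huv hT hanc hvleaf).leaf y} := by
  constructor
  · rintro t' ht'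
    rcases ht' with rfl | ht'
    · exact anc_phiq huv hT hanc hvleaf (hl.1 (T.leaf x) (by simp))
    · rw [Set.mem_singleton_iff] at ht'
      subst ht'
      exact anc_phiq huv hT hanc hvleaf (hl.1 (T.leaf y) (by simp))
  · intro w' hw'
    have hx' := hw' ((Tq huv hT hanc hvleaf).leaf x) (by simp)
    have hy' := hw' ((Tq huv hT hanc hvleaf).leaf y) (by simp)
    rw [show (Tq huv hT hanc hvleaf).leaf x = phiq huv.ne (T.leaf x) from rfl,
      Tq_anc_iff huv hT hanc hvleaf (w' := w') (b := T.leaf x)] at hx'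
    rw [show (Tq huv hT hanc hvleaf).leaf y = phiq huv.ne (T.leaf y) from rfl,
      Tq_anc_iff huv hT hanc hvleaf (w' := w') (b := T.leaf y)] at hy'
    obtain ⟨wx, hwx, hpx⟩ := hx'
    obtain ⟨wy, hwy, hpy⟩ := hy'
    have hcommon : ∃ w, w ∈ (T.pth T.root (T.leaf x)).support ∧
        w ∈ (T.pth T.root (T.leaf y)).support ∧ phiq huv.ne w = w' := by
      rcases phiq_fiber huv.ne (hpx.trans hpy.symm) with h | ⟨h1, h2⟩ | ⟨h1, h2⟩
      · exact ⟨wx, hwx, h ▸ hwy, hpx⟩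
      · -- wx = uu, wy = vv
        refine ⟨uu, h1 ▸ hwx, anc_anc_mem hanc (h2 ▸ hwy), h1 ▸ hpx⟩
      · refine ⟨uu, anc_anc_mem hanc (h1 ▸ hwx), h2 ▸ hwy, h2 ▸ hpy⟩
    obtain ⟨w, h1, h2, rfl⟩ := hcommon
    have hwanc : T.Anc w l := by
      apply hl.2 w
      rintro t ht
      rcases ht with rfl | ht
      · exact anc_iff.mpr h1
      · rw [Set.mem_singleton_iff] at ht
        subst ht
        exact anc_iff.mpr h2
    exact anc_phiq huv hT hanc hvleaf hwanc

lemma PHL_transfer (hμe : μ s(uu, vv) = none) {x y : X} (m : M) :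
    PathHasLabel (Tq huv hT hanc hvleaf) (lamq huv.ne μ) x y m
      ↔ PathHasLabel T μ x y m := by
  haveI : DecidableEq (Tq huv hT hanc hvleaf).V := (inferInstance : DecidableEq (Vq T vv))
  obtain ⟨l, hl⟩ := lca_exists (T.leaf x) (T.leaf y)
  constructor
  · rintro ⟨l', hl', p', hp', e', he', hv⟩
    have hl'eq : l' = phiq huv.ne l :=
      lca_unique (T := Tq huv hT hanc hvleaf) hl' (lca_phiq huv hT hanc hvleaf hl)
    subst hl'eq
    have hp'eq : p' = projWalk huv.ne (T.pth l (T.leaf y)) := by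
      have h1 := (Tq huv hT hanc hvleaf).pth_eq p' hp'
      exact h1.trans (projWalk_pth huv hT hanc hvleaf l (T.leaf y))
    subst hp'eq
    obtain ⟨e₀, he₀, hne0, rfl⟩ := projWalk_edges_sub huv _ he'
    have hval : lamq huv.ne μ (Sym2.map (phiq huv.ne) e₀) = μ e₀ := by
      unfold lamq
      rw [liftq_proj' huv (SimpleGraph.Walk.edges_subset_edgeSet _ he₀) hne0]
    rw [hval] at hv
    exact ⟨l, hl, T.pth l (T.leaf y), T.pth_isPath _ _, e₀, he₀, hv⟩
  · rintro ⟨l₀, hl₀, p, hp, e₀, he₀, hv⟩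
    have hl₀eq : l₀ = l := lca_unique hl₀ hl
    subst hl₀eq
    have hpeq : p = T.pth l₀ (T.leaf y) := T.pth_eq p hp
    subst hpeq
    have hne0 : e₀ ≠ s(uu, vv) := by
      intro h
      rw [h, hμe] at hv
      cases hv
    refine ⟨phiq huv.ne l₀, lca_phiq huv hT hanc hvleaf hl₀,
      projWalk huv.ne (T.pth l₀ (T.leaf y)), projWalk_isPath huv _ (T.pth_isPath _ _),
      Sym2.map (phiq huv.ne) e₀, projWalk_edges_mem huv _ he₀ hne0, ?_⟩
    unfold lamq
    erw [liftq_proj' huv (SimpleGraph.Walk.edges_subset_edgeSet _ he₀) hne0]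
    exact hv

lemma Explains_transfer {eps : X → X → Option M} (hexpμ : Explains T μ eps)
    (hμe : μ s(uu, vv) = none) :
    Explains (Tq huv hT hanc hvleaf) (lamq huv.ne μ) eps := by
  intro x y hxy
  obtain ⟨h1, h2⟩ := hexpμ x y hxy
  constructor
  · intro m
    rw [h1 m]
    exact (PHL_transfer huv hT hanc hvleaf μ hμe m).symm
  · rw [h2]
    constructor
    · intro h m hm
      exact h m ((PHL_transfer huv hT hanc hvleaf μ hμe m).mp hm)
    · intro h m hm
      exact h m ((PHL_transfer huv hT hanc hvleaf μ hμe m).mpr hm)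

end Transfer

end Contraction

section MainAux

open RootedTree

variable {X M : Type} {T : RootedTree X} [DecidableEq T.V] {lam lam' : Sym2 T.V → Option M}
  {eps : X → X → Option M}

lemma label_forces (hexp : Explains T lam eps) {u v : T.V} {x y : X} {m : M}
    (hxy : x ≠ y) (hlca : T.IsLcaSet u {T.leaf x, T.leaf y})
    (hedge : s(u, v) ∈ (T.pth u (T.leaf y)).edges)
    (hm : lam s(u, v) = some m) : eps x y = some m :=
  ((hexp x y hxy).1 m).mpr ⟨u, hlca, T.pth u (T.leaf y), T.pth_isPath _ _, s(u, v), hedge, hm⟩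

lemma pathHasLabel_leaf_edge {u v : T.V} {x y : X} {m : M}
    (huv : T.G.Adj u v)
    (hlca : T.IsLcaSet u {T.leaf x, T.leaf y}) (hyv : v = T.leaf y) :
    PathHasLabel T lam x y m ↔ lam s(u, v) = some m := by
  subst hyv
  constructor
  · rintro ⟨l, hl, p, hp, e, he, hv⟩
    have hlu : l = u := lca_unique hl hlca
    subst hlu
    rw [T.pth_eq p hp, pth_adj huv] at he
    simp only [SimpleGraph.Walk.edges_cons, SimpleGraph.Walk.edges_nil,
      List.mem_singleton] at he
    rwa [he] at hv
  · intro hm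
    refine ⟨u, hlca, T.pth u (T.leaf y), T.pth_isPath _ _, s(u, T.leaf y), ?_, hm⟩
    rw [pth_adj huv]
    simp

lemma caseA_dir (hT : T.Phylo) (hexp : Explains T lam eps) (hexp' : Explains T lam' eps)
    {u v : T.V} (huv : T.G.Adj u v) (hanc : T.Anc u v) (hleaf : T.IsLeaf v) {m : M}
    (hm : lam s(u, v) = some m) : lam' s(u, v) = some m := by
  obtain ⟨x, y, hxy, hlca, hedge, hleafy⟩ := key_pair hT huv hanc
  have hyv := hleafy hleaf
  have heps : eps x y = some m := label_forces hexp hxy hlca hedge hm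
  have hPH : PathHasLabel T lam' x y m := ((hexp' x y hxy).1 m).mp heps
  exact (pathHasLabel_leaf_edge huv hlca hyv).mp hPH

lemma caseA (hT : T.Phylo) (hexp : Explains T lam eps) (hexp' : Explains T lam' eps)
    {u v : T.V} (huv : T.G.Adj u v) (hanc : T.Anc u v) (hleaf : T.IsLeaf v) :
    lam s(u, v) = lam' s(u, v) := by
  cases h1 : lam s(u, v) with
  | some m => exact (caseA_dir hT hexp hexp' huv hanc hleaf h1).symm
  | none =>
    cases h2 : lam' s(u, v) with
    | some m =>
      have h3 := caseA_dir hT hexp' hexp huv hanc hleaf h2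
      rw [h1] at h3
      cases h3
    | none => rfl

lemma caseB_some (hT : T.Phylo) (hexp : Explains T lam eps) (hexp' : Explains T lam' eps)
    {u v : T.V} (huv : T.G.Adj u v) (hanc : T.Anc u v) {m₁ m₂ : M}
    (h1 : lam s(u, v) = some m₁) (h2 : lam' s(u, v) = some m₂) : m₁ = m₂ := by
  obtain ⟨x, y, hxy, hlca, hedge, -⟩ := key_pair hT huv hanc
  have e1 := label_forces hexp hxy hlca hedge h1
  have e2 := label_forces hexp' hxy hlca hedge h2
  rw [e1] at e2
  injection e2

end MainAux

lemma edge_agree {X M : Type} {eps : X → X → Option M} {T : RootedTree X} [DecidableEq T.V]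
    {lamStar lam : Sym2 T.V → Option M}
    (hlr : LeastResolved eps T lamStar) (hexp : Explains T lam eps)
    {u v : T.V} (huv : T.G.Adj u v) (hanc : T.Anc u v) :
    lam s(u, v) = lamStar s(u, v) := by
  obtain ⟨hT, hexpStar, hmin⟩ := hlr
  by_cases hleaf : T.IsLeaf v
  · exact caseA hT hexp hexpStar huv hanc hleaf
  · have hne : ∀ μ : Sym2 T.V → Option M, Explains T μ eps → μ s(u, v) ≠ none := by
      intro μ hμ hnone
      exact hmin (Tq huv hT hanc hleaf) (phiq huv.ne) (lamq huv.ne μ)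
        (Tq_contractionMap huv hT hanc hleaf) (phiq_not_injective huv)
        (Tq_phylo huv hT hanc hleaf)
        (Explains_transfer huv hT hanc hleaf μ hμ hnone)
    cases h1 : lam s(u, v) with
    | none => exact absurd h1 (hne lam hexp)
    | some m₁ =>
      cases h2 : lamStar s(u, v) with
      | none => exact absurd h2 (hne lamStar hexpStar)
      | some m₂ =>
        exact congrArg some (caseB_some hT hexp hexpStar huv hanc h1 h2)

theorem stmt17 {X M : Type} [Fintype X] [Fintype M] [Nonempty M]
    (hX : 1 < Fintype.card X)
    (eps : X → X → Option M)
    (htl : TreeLike eps)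
    (Tstar : RootedTree X) (lamStar : Sym2 Tstar.V → Option M)
    (hlr : LeastResolved eps Tstar lamStar)
    (lam : Sym2 Tstar.V → Option M)
    (hexp : Explains Tstar lam eps) :
    ∀ a b : Tstar.V, Tstar.G.Adj a b → lam s(a, b) = lamStar s(a, b) := by
  classical
  intro a b hadj
  rcases RootedTree.adj_anc_or hadj with h | h
  · exact edge_agree hlr hexp hadj h
  · have h2 := edge_agree hlr hexp hadj.symm h
    rw [show s(a, b) = s(b, a) from Sym2.eq_swap]
    exact h2

end GenFitch
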